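/- Let (X, d, μ) be an upper doubling, geometrically doubling metric measure space with μ(X) = ∞. Then the space L^∞_{b,0}(μ) of bounded functions with bounded support and integral zero is dense in L^p(μ) for every p ∈ (1,∞). -/

import Mathlib

open Metric MeasureTheory
open scoped ENNReal

/-- If `(X, d, μ)` is upper doubling and geometrically doubling with `μ(X) = ∞`, then the
bounded functions with bounded support and mean zero are dense in `L^p(μ)`, `p ∈ (1,∞)`. -/
theorem dense_bounded_mean_zero {X : Type*} [MetricSpace X] [MeasurableSpace X]
    [BorelSpace X] (μ : Measure X) (Λ : X → ℝ → ℝ) (Cl : ℝ) (N₀ : ℕ)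
    (hΛpos : ∀ (x : X) (r : ℝ), 0 < r → 0 < Λ x r)
    (hΛmono : ∀ (x : X) (r s : ℝ), 0 < r → r ≤ s → Λ x r ≤ Λ x s)
    (hΛdom : ∀ (x : X) (r : ℝ), 0 < r → μ (ball x r) ≤ ENNReal.ofReal (Λ x r))
    (hΛdouble : ∀ (x : X) (r : ℝ), 0 < r → Λ x r ≤ Cl * Λ x (r / 2))
    (hgd : ∀ (x : X) (r : ℝ), ∃ s : Finset X,
      s.card ≤ N₀ ∧ ball x r ⊆ ⋃ y ∈ s, ball y (r / 2))
    (hinf : μ Set.univ = ⊤) :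
    ∀ p : ℝ, 1 < p → ∀ f : X → ℝ, MemLp f (ENNReal.ofReal p) μ → ∀ ε : ℝ, 0 < ε →
      ∃ g : X → ℝ, Measurable g ∧ (∃ M : ℝ, ∀ x, |g x| ≤ M) ∧
        Bornology.IsBounded (Function.support g) ∧
        Integrable g μ ∧ (∫ x, g x ∂μ) = 0 ∧
        eLpNorm (fun x => f x - g x) (ENNReal.ofReal p) μ ≤ ENNReal.ofReal ε := by
  intro p hp f hf ε hε
  have hp0 : (0:ℝ) < p := by linarith
  set q := ENNReal.ofReal p with hqdef
  have hq0 : q ≠ 0 := (ENNReal.ofReal_pos.2 hp0).ne'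
  have hqt : q ≠ ∞ := ENNReal.ofReal_ne_top
  have hqp : q.toReal = p := ENNReal.toReal_ofReal hp0.le
  have hq1 : 1 ≤ q := by
    rw [hqdef]; exact ENNReal.one_le_ofReal.2 hp.le
  -- X is nonempty
  have hX : Nonempty X := by
    by_contra h
    rw [not_nonempty_iff] at h
    rw [Set.univ_eq_empty_iff.2 h, measure_empty] at hinf
    exact ENNReal.zero_ne_top hinf
  obtain ⟨x₀⟩ := hX
  have hε3 : (0:ℝ) < ε / 3 := by linarith
  -- Step 1: approximate by a simple function
  obtain ⟨s, hsnear, hsmem⟩ := hf.exists_simpleFunc_eLpNorm_sub_lt hqt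
    (ENNReal.ofReal_pos.2 hε3).ne'
  obtain ⟨C₀, hC₀⟩ := s.exists_forall_norm_le
  set C : ℝ := max C₀ 0 with hCdef
  have hC0 : 0 ≤ C := le_max_right _ _
  have hCb : ∀ x, |s x| ≤ C := fun x => le_trans (hC₀ x) (le_max_left _ _)
  have hsmeas : Measurable s := s.measurable
  have hTmeas : MeasurableSet (Function.support s) := measurableSet_support hsmeas
  have hTfin : μ (Function.support s) < ∞ :=
    s.measure_support_lt_top_of_memLp hsmem hq0 hqt
  -- Step 2: truncate to a ball
  set D : ℕ → Set X := fun k => Function.support s \ ball x₀ k with hDdef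
  have hDmeas : ∀ k, MeasurableSet (D k) := fun k =>
    hTmeas.diff measurableSet_ball
  have hDanti : Antitone D := by
    intro i j hij
    exact Set.diff_subset_diff_right (ball_subset_ball (by exact_mod_cast hij))
  have hDint : ⋂ k, D k = ∅ := by
    ext x
    simp only [Set.mem_iInter, Set.mem_empty_iff_false, iff_false, not_forall]
    obtain ⟨k, hk⟩ := exists_nat_gt (dist x x₀)
    exact ⟨k, fun hx => hx.2 (mem_ball.2 hk)⟩
  have htendD : Filter.Tendsto (fun k => μ (D k)) Filter.atTop (nhds 0) := by
    have := tendsto_measure_iInter_atTop (μ := μ)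
      (fun k => (hDmeas k).nullMeasurableSet) hDanti
      ⟨0, (lt_of_le_of_lt (measure_mono Set.diff_subset) hTfin).ne⟩
    rwa [hDint, measure_empty] at this
  set δ : ℝ≥0∞ := (ENNReal.ofReal (ε/3) / ENNReal.ofReal (C+1)) ^ p with hδdef
  have hδ0 : 0 < δ := by
    apply ENNReal.rpow_pos
      (ENNReal.div_pos (ENNReal.ofReal_pos.2 hε3).ne' ENNReal.ofReal_ne_top)
      (ENNReal.div_lt_top ENNReal.ofReal_ne_top
        (ENNReal.ofReal_pos.2 (by linarith : (0:ℝ) < C + 1)).ne').ne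
  obtain ⟨k, hk⟩ := (htendD.eventually_lt_const hδ0).exists
  set g₁ : X → ℝ := (ball x₀ (k:ℝ)).indicator s with hg₁def
  have hg₁meas : Measurable g₁ := hsmeas.indicator measurableSet_ball
  have hg₁b : ∀ x, |g₁ x| ≤ C := by
    intro x
    rw [hg₁def]
    by_cases hx : x ∈ ball x₀ (k:ℝ)
    · rw [Set.indicator_of_mem hx]; exact hCb x
    · rw [Set.indicator_of_notMem hx, abs_zero]; exact hC0
  -- the eLpNorm of s - g₁ is small
  have hsg₁ : eLpNorm (fun x => s x - g₁ x) q μ ≤ ENNReal.ofReal (ε/3) := by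
    have hmono : ∀ x, ‖s x - g₁ x‖ ≤ ‖(D k).indicator (fun _ => C) x‖ := by
      intro x
      rw [hg₁def]
      by_cases hx : x ∈ ball x₀ (k:ℝ)
      · rw [Set.indicator_of_mem hx, sub_self, norm_zero]; positivity
      · rw [Set.indicator_of_notMem hx, sub_zero]
        by_cases hsx : s x = 0
        · rw [hsx, norm_zero]; positivity
        · have hxD : x ∈ D k := ⟨hsx, hx⟩
          rw [Set.indicator_of_mem hxD, Real.norm_eq_abs, Real.norm_eq_abs,
            abs_of_nonneg hC0]
          exact hCb x
    calc eLpNorm (fun x => s x - g₁ x) q μ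
        ≤ eLpNorm ((D k).indicator (fun _ => C)) q μ := eLpNorm_mono hmono
      _ = (‖C‖₊ : ℝ≥0∞) * μ (D k) ^ (1 / q.toReal) :=
          eLpNorm_indicator_const (hDmeas k) hq0 hqt
      _ ≤ ENNReal.ofReal (C+1) * δ ^ (1 / p) := by
          rw [← enorm_eq_nnnorm, Real.enorm_eq_ofReal hC0, hqp]
          exact mul_le_mul' (ENNReal.ofReal_le_ofReal (by linarith))
            (ENNReal.rpow_le_rpow hk.le (by positivity))
      _ = ENNReal.ofReal (C+1) * (ENNReal.ofReal (ε/3) / ENNReal.ofReal (C+1)) := by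
          rw [hδdef, ← ENNReal.rpow_mul, mul_one_div_cancel hp0.ne', ENNReal.rpow_one]
      _ = ENNReal.ofReal (ε/3) :=
          ENNReal.mul_div_cancel (ENNReal.ofReal_pos.2 (by linarith)).ne'
            ENNReal.ofReal_ne_top
  have hg₁supp : Function.support g₁ ⊆ ball x₀ (k:ℝ) := Set.support_indicator_subset
  have hg₁int : Integrable g₁ μ := by
    have hmaj : Integrable ((Function.support s).indicator (fun _ => C)) μ :=
      (integrable_indicator_iff hTmeas).2 (integrableOn_const hTfin.ne)
    refine hmaj.mono' hg₁meas.aestronglyMeasurable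
      (Filter.Eventually.of_forall (fun x => ?_))
    show ‖g₁ x‖ ≤ (Function.support s).indicator (fun _ => C) x
    by_cases hsx : s x = 0
    · have : g₁ x = 0 := by
        rw [hg₁def]
        by_cases hx : x ∈ ball x₀ (k:ℝ)
        · rw [Set.indicator_of_mem hx, hsx]
        · rw [Set.indicator_of_notMem hx]
      rw [this, norm_zero]
      exact Set.indicator_nonneg (fun _ _ => hC0) x
    · rw [Set.indicator_of_mem (Function.mem_support.2 hsx)]
      exact hg₁b x
  -- Step 3: correct the mean
  set a : ℝ := ∫ x, g₁ x ∂μ with hadef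
  by_cases ha : a = 0
  · -- no correction needed
    refine ⟨g₁, hg₁meas, ⟨C, hg₁b⟩, isBounded_ball.subset hg₁supp, hg₁int, ha, ?_⟩
    have hdecomp : (fun x => f x - g₁ x) = (fun x => (f x - s x) + (s x - g₁ x)) := by
      funext x; ring
    rw [hdecomp]
    calc eLpNorm (fun x => (f x - s x) + (s x - g₁ x)) q μ
        ≤ eLpNorm (fun x => f x - s x) q μ + eLpNorm (fun x => s x - g₁ x) q μ :=
          eLpNorm_add_le (hf.1.sub hsmeas.aestronglyMeasurable)
            (hsmeas.aestronglyMeasurable.sub hg₁meas.aestronglyMeasurable) hq1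
      _ ≤ ENNReal.ofReal (ε/3) + ENNReal.ofReal (ε/3) := add_le_add hsnear.le hsg₁
      _ ≤ ENNReal.ofReal ε := by
          rw [← ENNReal.ofReal_add hε3.le hε3.le]
          exact ENNReal.ofReal_le_ofReal (by linarith)
  · -- need correction; find a large ball
    set L : ℝ≥0∞ := ENNReal.ofReal |a| / ENNReal.ofReal (ε/3) with hLdef
    have hL0 : L ≠ 0 := by
      apply ENNReal.div_pos _ ENNReal.ofReal_ne_top |>.ne'
      exact (ENNReal.ofReal_pos.2 (abs_pos.2 ha)).ne'
    have hLt : L ≠ ∞ := by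
      rw [hLdef]
      exact (ENNReal.div_lt_top ENNReal.ofReal_ne_top
        (ENNReal.ofReal_pos.2 hε3).ne').ne
    set K : ℝ≥0∞ := L ^ (p / (p-1)) with hKdef
    have hKt : K < ∞ := ENNReal.rpow_lt_top_of_nonneg (div_nonneg hp0.le (by linarith)) hLt
    have htendB : Filter.Tendsto (fun n : ℕ => μ (ball x₀ (n:ℝ))) Filter.atTop (nhds ⊤) := by
      have hmono : Monotone (fun n : ℕ => ball x₀ (n:ℝ)) := fun i j hij =>
        ball_subset_ball (by exact_mod_cast hij)
      have := tendsto_measure_iUnion_atTop (μ := μ) hmono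
      have huniv : ⋃ n : ℕ, ball x₀ (n:ℝ) = Set.univ := by
        ext x
        simp only [Set.mem_iUnion, Set.mem_univ, iff_true]
        obtain ⟨n, hn⟩ := exists_nat_gt (dist x x₀)
        exact ⟨n, mem_ball.2 hn⟩
      rwa [huniv, hinf] at this
    obtain ⟨R, hRK, hR1⟩ := ((htendB.eventually
      (eventually_gt_nhds (max_lt hKt (by norm_num : (1:ℝ≥0∞) < ⊤)))).and
      (Filter.eventually_ge_atTop 1)).exists
    set B : Set X := ball x₀ (R:ℝ) with hBdef
    set m : ℝ≥0∞ := μ B with hmdef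
    have hmK : K < m := lt_of_le_of_lt (le_max_left _ _) hRK
    have hm1 : 1 < m := lt_of_le_of_lt (le_max_right _ _) hRK
    have hm0 : m ≠ 0 := (lt_trans zero_lt_one hm1).ne'
    have hmt : m ≠ ∞ := by
      have hRpos : (0:ℝ) < R := by exact_mod_cast hR1
      exact (lt_of_le_of_lt (hΛdom x₀ R hRpos) ENNReal.ofReal_lt_top).ne
    have hmrpos : 0 < m.toReal := ENNReal.toReal_pos hm0 hmt
    set c : ℝ := a / m.toReal with hcdef
    set g : X → ℝ := fun x => g₁ x - B.indicator (fun _ => c) x with hgdef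
    have hindmeas : Measurable (B.indicator (fun _ => c)) :=
      measurable_const.indicator measurableSet_ball
    have hindint : Integrable (B.indicator (fun _ => c)) μ :=
      (integrable_indicator_iff measurableSet_ball).2
        (integrableOn_const hmt)
    refine ⟨g, hg₁meas.sub hindmeas, ⟨C + |c|, ?_⟩, ?_, hg₁int.sub hindint, ?_, ?_⟩
    · -- boundedness
      intro x
      rw [hgdef]
      refine le_trans (abs_sub _ _) (add_le_add (hg₁b x) ?_)
      by_cases hx : x ∈ B
      · rw [Set.indicator_of_mem hx]
      · rw [Set.indicator_of_notMem hx, abs_zero]; positivity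
    · -- bounded support
      have : Function.support g ⊆ ball x₀ (max (k:ℝ) (R:ℝ)) := by
        intro x hx
        have hx' : g₁ x ≠ 0 ∨ B.indicator (fun _ => c) x ≠ 0 := by
          by_contra h
          push_neg at h
          apply hx
          rw [hgdef]; show g₁ x - _ = 0; rw [h.1, h.2, sub_zero]
        rcases hx' with h | h
        · exact ball_subset_ball (le_max_left _ _) (hg₁supp h)
        · exact ball_subset_ball (le_max_right _ _) (Set.support_indicator_subset h)
      exact isBounded_ball.subset this
    · -- mean zero
      rw [hgdef]
      show (∫ x, (g₁ x - B.indicator (fun _ => c) x) ∂μ) = 0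
      rw [integral_sub hg₁int hindint, integral_indicator_const _ measurableSet_ball]
      simp only [smul_eq_mul, ← hadef, measureReal_def, ← hBdef, ← hmdef, hcdef]
      field_simp
      ring
    · -- eLpNorm estimate
      have hdecomp : (fun x => f x - g x) =
          (fun x => ((f x - s x) + (s x - g₁ x)) + B.indicator (fun _ => c) x) := by
        funext x; rw [hgdef]; show f x - (g₁ x - _) = _; ring
      have hind : eLpNorm (B.indicator (fun _ => c)) q μ ≤ ENNReal.ofReal (ε/3) := by
        rw [eLpNorm_indicator_const measurableSet_ball hq0 hqt, hqp,
          Real.enorm_eq_ofReal_abs]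
        have hc_abs : |c| = |a| / m.toReal := by
          rw [hcdef, abs_div, abs_of_nonneg hmrpos.le]
        rw [hc_abs, ENNReal.ofReal_div_of_pos hmrpos, ENNReal.ofReal_toReal hmt]
        have hexp : 0 ≤ 1 - 1/p := by
          rw [sub_nonneg, div_le_one hp0]
          linarith
        have hKpow : L ≤ m ^ (1 - 1/p) := by
          calc L = K ^ (1 - 1/p) := by
                have hexps : p / (p-1) * (1 - 1/p) = 1 := by
                  have h1 : p - 1 ≠ 0 := by linarith
                  field_simp
                rw [hKdef, ← ENNReal.rpow_mul, hexps, ENNReal.rpow_one]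
            _ ≤ m ^ (1 - 1/p) := ENNReal.rpow_le_rpow hmK.le hexp
        have hA : ENNReal.ofReal |a| ≤ ENNReal.ofReal (ε/3) * m ^ (1 - 1/p) :=
          calc ENNReal.ofReal |a|
              = ENNReal.ofReal (ε/3) * L :=
                (ENNReal.mul_div_cancel (ENNReal.ofReal_pos.2 hε3).ne'
                  ENNReal.ofReal_ne_top).symm
            _ ≤ ENNReal.ofReal (ε/3) * m ^ (1 - 1/p) := mul_le_mul_right hKpow _
        have hm' : m ^ (1 - 1/p) * m ^ (1/p) = m := by
          rw [← ENNReal.rpow_add _ _ hm0 hmt,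
            show (1 - 1/p) + 1/p = (1:ℝ) by ring, ENNReal.rpow_one]
        rw [div_eq_mul_inv, mul_right_comm, ← div_eq_mul_inv]
        apply ENNReal.div_le_of_le_mul
        calc ENNReal.ofReal |a| * m ^ (1/p)
            ≤ (ENNReal.ofReal (ε/3) * m ^ (1 - 1/p)) * m ^ (1/p) :=
              mul_le_mul_left hA _
          _ = ENNReal.ofReal (ε/3) * m := by rw [mul_assoc, hm']
      rw [hdecomp]
      calc eLpNorm (fun x => ((f x - s x) + (s x - g₁ x)) + B.indicator (fun _ => c) x) q μ
          ≤ eLpNorm (fun x => (f x - s x) + (s x - g₁ x)) q μ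
            + eLpNorm (B.indicator (fun _ => c)) q μ :=
            eLpNorm_add_le ((hf.1.sub hsmeas.aestronglyMeasurable).add
              (hsmeas.aestronglyMeasurable.sub hg₁meas.aestronglyMeasurable))
              hindmeas.aestronglyMeasurable hq1
        _ ≤ (eLpNorm (fun x => f x - s x) q μ + eLpNorm (fun x => s x - g₁ x) q μ)
            + eLpNorm (B.indicator (fun _ => c)) q μ := by
            gcongr
            exact eLpNorm_add_le (hf.1.sub hsmeas.aestronglyMeasurable)
              (hsmeas.aestronglyMeasurable.sub hg₁meas.aestronglyMeasurable) hq1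
        _ ≤ (ENNReal.ofReal (ε/3) + ENNReal.ofReal (ε/3)) + ENNReal.ofReal (ε/3) :=
            add_le_add (add_le_add hsnear.le hsg₁) hind
        _ ≤ ENNReal.ofReal ε := by
            rw [← ENNReal.ofReal_add hε3.le hε3.le, ← ENNReal.ofReal_add (by linarith) hε3.le]
            exact ENNReal.ofReal_le_ofReal (by linarith)
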